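/- Let F = T[a..b] and F' = T[a'..b'] (a < a') be neighboring runs with equal period p and equal Lyndon roots, with δ defined as the residue mod p of the difference of their Lyndon positions. Then the set of layers R = T[x..y] of the pyramid P(F,F') with a < x and y < b' is exactly { T[a'-kp-δ .. b+kp+δ] : k ≥ 4, a'-kp-δ > a, b+kp+δ < b' }, and each such layer has period kp + δ. -/

import Mathlib

open List

variable {α : Type*}

/-- `frag T a b` is the fragment `T[a..b]` (inclusive, 0-based). -/
def frag (T : List α) (a b : ℕ) : List α := (T.drop a).take (b + 1 - a)

/-- `p` is a period of `S`: `0 < p ≤ |S|` and `S[i] = S[i+p]` for all valid `i`. -/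
def IsPeriodOf (p : ℕ) (S : List α) : Prop :=
  0 < p ∧ p ≤ S.length ∧ ∀ i : ℕ, i + p < S.length → S[i]? = S[i + p]?

/-- The smallest period of `S`. -/
noncomputable def minPeriod (S : List α) : ℕ := sInf {p | IsPeriodOf p S}

/-- `T[a..b]` is a run: periodic (its smallest period occurs at least twice)
and maximal on both sides. -/
def IsRun (T : List α) (a b : ℕ) : Prop :=
  a ≤ b ∧ b < T.length ∧
  2 * minPeriod (frag T a b) ≤ b + 1 - a ∧
  (a = 0 ∨ T[a - 1]? ≠ T[a - 1 + minPeriod (frag T a b)]?) ∧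
  (b = T.length - 1 ∨ T[b + 1]? ≠ T[b + 1 - minPeriod (frag T a b)]?)

/-- `W` occurs in `T` at position `s`. -/
def OccursAt (T : List α) (s : ℕ) (W : List α) : Prop :=
  s + W.length ≤ T.length ∧ (T.drop s).take W.length = W

/-- The set of distinct square substrings of `T`. -/
def Squares (T : List α) : Set (List α) :=
  {W | ∃ X : List α, X ≠ [] ∧ W = X ++ X ∧ W <:+: T}

/-- A non-empty string is primitive if it is not a proper power. -/
def Primitive (U : List α) : Prop :=
  U ≠ [] ∧ ∀ (V : List α) (k : ℕ), U = (List.replicate k V).flatten → k = 1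

/-- Cyclic rotation moving the first `c` characters to the end. -/
def rot (c : ℕ) (L : List α) : List α := L.drop c ++ L.take c

/-- `lam` is the Lyndon root of a periodic string `S`: the lexicographically
smallest rotation of `S[0..per(S))`. -/
def LyndonRootOf [LinearOrder α] (S lam : List α) : Prop :=
  (∃ c < minPeriod S, lam = rot c (S.take (minPeriod S))) ∧
  ∀ c < minPeriod S, lam ≤ rot c (S.take (minPeriod S))

/-- Squares generated by a periodic string `U`: squares contained in `U`
whose smallest period equals that of `U`. -/
def FragSquares (U : List α) : Set (List α) :=
  {W | ∃ X : List α, X ≠ [] ∧ W = X ++ X ∧ W <:+: U ∧ minPeriod W = minPeriod U}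

/-- `subper U`: the minimum of `per(X)` over squares `X²` generated by `U`. -/
noncomputable def subper (U : List α) : ℕ :=
  sInf {q | ∃ X : List α, X ≠ [] ∧ (X ++ X) <:+: U ∧
    minPeriod (X ++ X) = minPeriod U ∧ minPeriod X = q}

/-- Fragments `[a..b]` and `[a'..b']` are neighboring:
`[a-1..b+1] ∩ [a'..b'] ≠ ∅`. -/
def Neighboring (a b a' b' : ℕ) : Prop := a ≤ b' + 1 ∧ a' ≤ b + 1

/-- `T[x..y]` is a layer of the pyramid of the neighboring runs
`F = T[a..b]` and `F' = T[a'..b']` (with `a < a'`): a subperiodic run `R`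
with `subper(R) = per(F)` such that `R ∩ (F ∪ F')` is periodic with
period `per(R)`. -/
def IsLayer (T : List α) (a b a' b' x y : ℕ) : Prop :=
  IsRun T x y ∧
  4 * subper (frag T x y) ≤ minPeriod (frag T x y) ∧
  subper (frag T x y) = minPeriod (frag T a b) ∧
  2 * minPeriod (frag T x y) ≤ min y b' + 1 - max x a ∧
  IsPeriodOf (minPeriod (frag T x y)) (frag T (max x a) (min y b'))

/-- A `τ`-synchronizing set of `T` (Kempa–Kociumaka): consistency and density. -/
def SyncSet (T : List α) (τ : ℕ) (S : Set ℕ) : Prop :=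
  (∀ i ∈ S, i + 2 * τ ≤ T.length) ∧
  (∀ i j : ℕ, i + 2 * τ ≤ T.length → j + 2 * τ ≤ T.length →
    (T.drop i).take (2 * τ) = (T.drop j).take (2 * τ) → (i ∈ S ↔ j ∈ S)) ∧
  (∀ i : ℕ, i + 3 * τ - 1 ≤ T.length →
    ((∀ k ∈ S, k < i ∨ i + τ ≤ k) ↔
      3 * minPeriod ((T.drop i).take (3 * τ - 1)) ≤ τ))


section LayersHelpers

set_option linter.deprecated false

variable {α : Type*}

lemma frag_length (T : List α) (a b : ℕ) :
    (frag T a b).length = min (b + 1 - a) (T.length - a) := by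
  simp [frag]

lemma frag_length' (T : List α) (a b : ℕ) (hab : a ≤ b) (hb : b < T.length) :
    (frag T a b).length = b + 1 - a := by
  rw [frag_length]; omega

lemma frag_get? (T : List α) (a b i : ℕ) (h : i < b + 1 - a) :
    (frag T a b)[i]? = T[a + i]? := by
  rw [frag, List.getElem?_take_of_lt h, List.getElem?_drop]

lemma frag_ne_nil (T : List α) (a b : ℕ) (hab : a ≤ b) (hb : b < T.length) :
    frag T a b ≠ [] := by
  have := frag_length' T a b hab hb
  intro h; rw [h] at this; simp at this; omega

lemma isPeriodOf_length {S : List α} (h : S ≠ []) : IsPeriodOf S.length S :=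
  ⟨List.length_pos_iff.mpr h, le_rfl, fun _ hi => by omega⟩

lemma minPeriod_isPeriodOf {S : List α} (h : S ≠ []) : IsPeriodOf (minPeriod S) S := by
  have : ({p : ℕ | IsPeriodOf p S}).Nonempty := ⟨S.length, isPeriodOf_length h⟩
  exact Nat.sInf_mem this

lemma minPeriod_le {S : List α} {m : ℕ} (h : IsPeriodOf m S) : minPeriod S ≤ m :=
  Nat.sInf_le h

lemma minPeriod_pos {S : List α} (h : S ≠ []) : 0 < minPeriod S :=
  (minPeriod_isPeriodOf h).1

/-- Build a period of a fragment from a `T`-level periodicity statement. -/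
lemma isPeriodOf_frag_ofT {T : List α} {x y m : ℕ} (hm : 0 < m) (hxy : x ≤ y)
    (hyn : y < T.length) (hmlen : m ≤ y + 1 - x)
    (hper : ∀ i, x ≤ i → i + m ≤ y → T[i]? = T[i + m]?) :
    IsPeriodOf m (frag T x y) := by
  refine ⟨hm, ?_, ?_⟩
  · rw [frag_length' T x y hxy hyn]; exact hmlen
  · intro i hi
    rw [frag_length' T x y hxy hyn] at hi
    rw [frag_get? T x y i (by omega), frag_get? T x y (i+m) (by omega)]
    have := hper (x + i) (by omega) (by omega)
    rw [this]; ring_nf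

/-- Extract `T`-level periodicity from a fragment period. -/
lemma isPeriodOf_frag_toT {T : List α} {x y m : ℕ} (hyn : y < T.length)
    (h : IsPeriodOf m (frag T x y)) :
    ∀ i, x ≤ i → i + m ≤ y → T[i]? = T[i + m]? := by
  intro i hxi him
  have hxy : x ≤ y := by
    have h21 := h.2.1; have h11 := h.1
    rw [frag_length] at h21
    omega
  have hlen := frag_length' T x y hxy hyn
  have h3 := h.2.2 (i - x) (by omega)
  rw [frag_get? T x y _ (by omega), frag_get? T x y _ (by omega)] at h3
  have e1 : x + (i - x) = i := by omega
  have e2 : x + (i - x + m) = i + m := by omega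
  rwa [e1, e2] at h3

/-- An occurrence (at `T`-level) of an infix of a fragment. -/
lemma occ_of_infix {T : List α} {x y : ℕ} {W : List α} (hxy : x ≤ y) (hyn : y < T.length)
    (h : W <:+: frag T x y) :
    ∃ s, x ≤ s ∧ s + W.length ≤ y + 1 ∧ ∀ j, j < W.length → T[s + j]? = W[j]? := by
  obtain ⟨u, v, huv⟩ := h
  have hlen : u.length + W.length + v.length = y + 1 - x := by
    have := congrArg List.length huv
    simp only [List.length_append, frag_length' T x y hxy hyn] at this
    omega
  refine ⟨x + u.length, Nat.le_add_right _ _, by omega, ?_⟩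
  intro j hj
  have h1 : (frag T x y)[u.length + j]? = T[x + (u.length + j)]? :=
    frag_get? T x y _ (by omega)
  rw [← huv, List.append_assoc, List.getElem?_append_right (by omega)] at h1
  simp only [Nat.add_sub_cancel_left] at h1
  rw [List.getElem?_append_left hj] at h1
  have e : x + u.length + j = x + (u.length + j) := by omega
  rw [e]; exact h1.symm

lemma isPeriodOf_append_self {X : List α} (h : X ≠ []) : IsPeriodOf X.length (X ++ X) := by
  refine ⟨List.length_pos_iff.mpr h, by simp, ?_⟩
  intro i hi
  simp only [List.length_append] at hi
  rw [List.getElem?_append_left (by omega), List.getElem?_append_right (by omega)]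
  congr 1; omega

lemma per_occ {T W : List α} {s m : ℕ} (hX : IsPeriodOf m W)
    (hocc : ∀ j, j < W.length → T[s + j]? = W[j]?) :
    ∀ j, j + m < W.length → T[s + j]? = T[s + j + m]? := by
  intro j hj
  rw [hocc j (by omega), hX.2.2 j hj, ← hocc (j + m) hj]
  congr 1; omega

lemma isPeriodOf_of_occ {T W : List α} {s m : ℕ} (hm : 0 < m) (hmW : m ≤ W.length)
    (hocc : ∀ j, j < W.length → T[s + j]? = W[j]?)
    (hperT : ∀ j, j + m < W.length → T[s + j]? = T[s + j + m]?) :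
    IsPeriodOf m W := by
  refine ⟨hm, hmW, ?_⟩
  intro i hi
  rw [← hocc i (by omega), ← hocc (i + m) hi, hperT i hi]
  congr 1; omega

/-- The fundamental representation lemma: inside a `p`-periodic zone of `T`
containing a copy of `lam` at position `l`, every character is given by
`lam` read cyclically. -/
lemma repGen {T lam : List α} {p : ℕ} (hp0 : 0 < p) (u v l e : ℕ)
    (hper : ∀ i, u ≤ i → i + p ≤ v → T[i]? = T[i + p]?)
    (hlg : ∀ j, j < p → lam[j]? = T[l + j]?)
    (hul : u ≤ l) (hlv : l + p ≤ v + 1) (he : (l + e) % p = 0) :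
    ∀ i, u ≤ i → i ≤ v → T[i]? = lam[(i + e) % p]? := by
  have step : ∀ c i, u ≤ i → i + c * p ≤ v → T[i]? = T[i + c * p]? := by
    intro c
    induction c with
    | zero => intro i _ _; simp
    | succ c ih =>
      intro i hui hic
      have hcc : (c + 1) * p = c * p + p := by ring
      have h1 : T[i]? = T[i + p]? := hper i hui (by omega)
      have h2 := ih (i + p) (by omega) (by omega)
      rw [h1, h2]; congr 1; omega
  have residue : ∀ i j, u ≤ i → i ≤ v → u ≤ j → j ≤ v → i % p = j % p →
      T[i]? = T[j]? := by
    intro i j hui hiv huj hjv hmod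
    rcases le_total i j with hle | hle
    · obtain ⟨c, hc⟩ := (Nat.modEq_iff_dvd' hle).mp hmod
      rw [Nat.mul_comm] at hc
      have : j = i + c * p := by omega
      rw [this]; exact step c i hui (by omega)
    · obtain ⟨c, hc⟩ := (Nat.modEq_iff_dvd' hle).mp hmod.symm
      rw [Nat.mul_comm] at hc
      have : i = j + c * p := by omega
      rw [this]; exact (step c j huj (by omega)).symm
  intro i hui hiv
  have hjp : (i + e) % p < p := Nat.mod_lt _ hp0
  have hlam := hlg ((i + e) % p) hjp
  have hres : T[i]? = T[l + (i + e) % p]? := by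
    apply residue i _ hui hiv (by omega) (by omega)
    have h1 : (l + (i + e) % p) % p = (l + (i + e)) % p := Nat.add_mod_mod l (i + e) p
    have h2 : l + (i + e) = i + (l + e) := by ring
    have h3 : (i + (l + e)) % p = (i + (l + e) % p) % p := (Nat.add_mod_mod i (l + e) p).symm
    rw [h1, h2, h3, he]
    simp
  rw [hres, ← hlam]

/-- If `lam` read cyclically has period `d` on a window of `p` consecutive
positions, then `p ∣ d` (since `T[a..b]` has minimal period `p`). -/
lemma keyGen {T lam : List α} {p a b e : ℕ} (hp0 : 0 < p) (hab : a ≤ b) (hbn : b < T.length)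
    (h2p : 2 * p ≤ b + 1 - a) (hminp : minPeriod (frag T a b) = p)
    (rep : ∀ i, a ≤ i → i ≤ b → T[i]? = lam[(i + e) % p]?)
    (t d : ℕ) (h : ∀ j, j < p → lam[(t + j) % p]? = lam[(t + j + d) % p]?) :
    d % p = 0 := by
  by_contra hd
  have hdp : d % p < p := Nat.mod_lt _ hp0
  have hall : ∀ c, lam[c % p]? = lam[(c + d % p) % p]? := by
    intro c
    have htp : t % p < p := Nat.mod_lt _ hp0
    set j := (c + (p - t % p)) % p with hj
    have hjlt : j < p := Nat.mod_lt _ hp0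
    have h1 : (t + j) % p = c % p := by
      have e1 : (t + j) % p = (t + (c + (p - t % p))) % p := Nat.add_mod_mod _ _ _
      have hmd := Nat.mod_add_div t p
      have e2 : t + (c + (p - t % p)) = c + p * (t / p) + p := by omega
      have e3 : c + p * (t / p) + p = c + (t / p + 1) * p := by ring
      rw [e1, e2, e3, Nat.add_mul_mod_self_right]
    have h2 : (t + j + d) % p = (c + d) % p := Nat.ModEq.add_right d h1
    have h3 : (c + d % p) % p = (c + d) % p := Nat.add_mod_mod _ _ _
    calc lam[c % p]? = lam[(t + j) % p]? := by rw [h1]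
      _ = lam[(t + j + d) % p]? := h j hjlt
      _ = lam[(c + d) % p]? := by rw [h2]
      _ = lam[(c + d % p) % p]? := by rw [h3]
  have hper : IsPeriodOf (d % p) (frag T a b) := by
    apply isPeriodOf_frag_ofT (Nat.pos_of_ne_zero hd) hab hbn (by omega)
    intro i hai hib
    rw [rep i hai (by omega), rep (i + d % p) (by omega) hib]
    have e1 : i + d % p + e = i + e + d % p := by ring
    rw [e1]
    exact hall (i + e)
  have := minPeriod_le hper
  omega

end LayersHelpers

/-- Characterization of the layers of a pyramid strictly inside `(a..b')`. -/
theorem layers_characterization [LinearOrder α] (T : List α)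
    (a b a' b' p ℓ ℓ' δ : ℕ) (lam : List α)
    (hab : a < a')
    (h1 : IsRun T a b) (h2 : IsRun T a' b')
    (hnb : Neighboring a b a' b')
    (hp1 : minPeriod (frag T a b) = p) (hp2 : minPeriod (frag T a' b') = p)
    (hlam1 : LyndonRootOf (frag T a b) lam)
    (hlam2 : LyndonRootOf (frag T a' b') lam)
    (hℓ : a ≤ ℓ ∧ ℓ < a + p ∧ frag T ℓ (ℓ + p - 1) = lam)
    (hℓ' : a' ≤ ℓ' ∧ ℓ' < a' + p ∧ frag T ℓ' (ℓ' + p - 1) = lam)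
    (hδ : δ < p ∧ (ℓ + δ) % p = ℓ' % p) :
    ({xy : ℕ × ℕ | IsLayer T a b a' b' xy.1 xy.2 ∧ a < xy.1 ∧ xy.2 < b'} =
      {xy : ℕ × ℕ | ∃ k : ℕ, 4 ≤ k ∧ a + (k * p + δ) < a' ∧ b + (k * p + δ) < b' ∧
        xy = (a' - (k * p + δ), b + (k * p + δ))}) ∧
    (∀ k : ℕ, 4 ≤ k → a + (k * p + δ) < a' → b + (k * p + δ) < b' →
      minPeriod (frag T (a' - (k * p + δ)) (b + (k * p + δ))) = k * p + δ) := by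
  obtain ⟨hab1, hbn, h2plen, maxL1, maxR1⟩ := h1
  obtain ⟨hab2, hbn2, h2plen2, maxL2, maxR2⟩ := h2
  obtain ⟨hnb1, hnb2⟩ := hnb
  obtain ⟨hℓa, hℓap, hℓlam⟩ := hℓ
  obtain ⟨hℓa', hℓap', hℓlam'⟩ := hℓ'
  obtain ⟨hδp, hδmod⟩ := hδ
  rw [hp1] at h2plen maxL1 maxR1
  rw [hp2] at h2plen2 maxL2 maxR2
  have hp0 : 0 < p := hp1 ▸ minPeriod_pos (frag_ne_nil T a b hab1 hbn)
  have PF : ∀ i, a ≤ i → i + p ≤ b → T[i]? = T[i + p]? :=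
    isPeriodOf_frag_toT hbn (hp1 ▸ minPeriod_isPeriodOf (frag_ne_nil T a b hab1 hbn))
  have PF' : ∀ i, a' ≤ i → i + p ≤ b' → T[i]? = T[i + p]? :=
    isPeriodOf_frag_toT hbn2 (hp2 ▸ minPeriod_isPeriodOf (frag_ne_nil T a' b' hab2 hbn2))
  have lamget : ∀ j, j < p → lam[j]? = T[ℓ + j]? := by
    intro j hj
    rw [← hℓlam, frag_get? T ℓ _ j (by omega)]
  have lamget' : ∀ j, j < p → lam[j]? = T[ℓ' + j]? := by
    intro j hj
    rw [← hℓlam', frag_get? T ℓ' _ j (by omega)]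
  set E := p - ℓ % p with hEdef
  set E' := p - ℓ' % p with hE'def
  have hE : (ℓ + E) % p = 0 := by
    have h1 := Nat.mod_add_div ℓ p
    have h2 : ℓ % p < p := Nat.mod_lt _ hp0
    have h3 : ℓ + E = p * (ℓ / p) + p := by omega
    have h4 : p * (ℓ / p) + p = p * (ℓ / p + 1) := by ring
    rw [h3, h4]; exact Nat.mul_mod_right p _
  have hE' : (ℓ' + E') % p = 0 := by
    have h1 := Nat.mod_add_div ℓ' p
    have h2 : ℓ' % p < p := Nat.mod_lt _ hp0
    have h3 : ℓ' + E' = p * (ℓ' / p) + p := by omega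
    have h4 : p * (ℓ' / p) + p = p * (ℓ' / p + 1) := by ring
    rw [h3, h4]; exact Nat.mul_mod_right p _
  set f : ℕ → Option α := fun c => lam[c % p]? with hfdef
  have fcong : ∀ {z w : ℕ}, z % p = w % p → f z = f w := by
    intro z w h; simp only [hfdef]; rw [h]
  have fp : ∀ z c, f (z + c * p) = f z := by
    intro z c; exact fcong (Nat.add_mul_mod_self_right z c p)
  have hshift : ∀ z, (z + δ + E') % p = (z + E) % p := by
    have hEm : ℓ + E ≡ 0 [MOD p] := by
      show (ℓ + E) % p = 0 % p; rw [Nat.zero_mod]; exact hE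
    have hE'm : ℓ' + E' ≡ 0 [MOD p] := by
      show (ℓ' + E') % p = 0 % p; rw [Nat.zero_mod]; exact hE'
    have hδm : ℓ + δ ≡ ℓ' [MOD p] := hδmod
    have h1 : ℓ + ℓ' + (δ + E') ≡ ℓ + ℓ' + E [MOD p] := by
      calc ℓ + ℓ' + (δ + E') = (ℓ + δ) + (ℓ' + E') := by ring
        _ ≡ ℓ' + 0 [MOD p] := Nat.ModEq.add hδm hE'm
        _ = 0 + ℓ' := by ring
        _ ≡ (ℓ + E) + ℓ' [MOD p] := (Nat.ModEq.add_right ℓ' hEm).symm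
        _ = ℓ + ℓ' + E := by ring
    have h0 : δ + E' ≡ E [MOD p] := Nat.ModEq.add_left_cancel' (ℓ + ℓ') h1
    intro z
    have h2 := Nat.ModEq.add_left z h0
    have e1 : z + δ + E' = z + (δ + E') := by ring
    rw [e1]; exact h2
  have fsh : ∀ z, f (z + δ + E') = f (z + E) := fun z => fcong (hshift z)
  have repF : ∀ i, a ≤ i → i ≤ b → T[i]? = f (i + E) :=
    repGen hp0 a b ℓ E PF lamget hℓa (by omega) hE
  have repF' : ∀ i, a' ≤ i → i ≤ b' → T[i]? = f (i + E') :=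
    repGen hp0 a' b' ℓ' E' PF' lamget' hℓa' (by omega) hE'
  have key : ∀ t d : ℕ, (∀ j, j < p → f (t + j) = f (t + j + d)) → d % p = 0 :=
    fun t d h => keyGen hp0 hab1 hbn h2plen hp1 repF t d h
  have hδ0 : 0 < δ := by
    rcases Nat.eq_zero_or_pos δ with h | h
    · exfalso
      subst h
      rcases maxL2 with h0 | hne
      · omega
      apply hne
      have e1 : T[a' - 1]? = f (a' - 1 + E) := repF _ (by omega) (by omega)
      have e2 : T[a' - 1 + p]? = f (a' - 1 + p + E') := repF' _ (by omega) (by omega)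
      rw [e1, e2]
      have e3 : a' - 1 + p + E' = (a' - 1 + E') + 1 * p := by ring
      rw [e3, fp]
      have e4 := fsh (a' - 1)
      simp only [Nat.add_zero] at e4
      exact e4.symm
    · exact h
  have hov : b + 2 ≤ a' + p := by
    by_contra hcon
    push_neg at hcon
    have hd : δ % p = 0 := by
      apply key (a' + E') δ
      intro j hj
      have r1 : T[a' + j]? = f (a' + j + E) := repF _ (by omega) (by omega)
      have r2 : T[a' + j]? = f (a' + j + E') := repF' _ (by omega) (by omega)
      have r3 : f (a' + j + E) = f (a' + j + δ + E') := (fsh (a' + j)).symm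
      have e1 : a' + E' + j = a' + j + E' := by ring
      have e2 : a' + j + E' + δ = a' + j + δ + E' := by ring
      rw [e1, e2, ← r2, r1, r3]
    have := Nat.mod_eq_of_lt hδp
    omega
  -- The central computation of minimal periods of candidate layers
  have minperY : ∀ q Y, q % p = δ → 4 * p ≤ q → a + q < a' → b + q < b' →
      a' + p - 1 ≤ Y → b + 1 ≤ Y → Y ≤ b + q → minPeriod (frag T (a' - q) Y) = q := by
    intro q Y hqδ h4q haq hbq hY1 hY2 hY3
    set x := a' - q with hxdef
    have hxq : x + q = a' := by omega
    have hax : a < x := by omega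
    have hYn : Y < T.length := by omega
    have hxY : x ≤ Y := by omega
    have PerQ : ∀ i, x ≤ i → i + q ≤ Y → T[i]? = T[i + q]? := by
      intro i hxi hiY
      have r1 : T[i]? = f (i + E) := repF i (by omega) (by omega)
      have r2 : T[i + q]? = f (i + q + E') := repF' _ (by omega) (by omega)
      rw [r1, r2]
      have hmd : (i + q + E') % p = (i + δ + E') % p := by
        have h0 : q ≡ δ [MOD p] := by
          show q % p = δ % p; rw [hqδ, Nat.mod_eq_of_lt hδp]
        have h1 := Nat.ModEq.add_right E' (Nat.ModEq.add_left i h0)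
        exact h1
      rw [← fsh i, ← fcong hmd]
    have hq0 : 0 < q := by omega
    have hle : minPeriod (frag T x Y) ≤ q :=
      minPeriod_le (isPeriodOf_frag_ofT hq0 hxY hYn (by omega) PerQ)
    by_contra hne
    have hlt : minPeriod (frag T x Y) < q := by omega
    set r := minPeriod (frag T x Y) with hrdef
    have hr0 : 0 < r := minPeriod_pos (frag_ne_nil T x Y hxY hYn)
    have PerR : ∀ i, x ≤ i → i + r ≤ Y → T[i]? = T[i + r]? :=
      isPeriodOf_frag_toT hYn (minPeriod_isPeriodOf (frag_ne_nil T x Y hxY hYn))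
    rcases le_or_gt (r + p) q with hcase | hcase
    · have hrp : r % p = 0 := by
        apply key (x + E) r
        intro j hj
        have r1 : T[x + j]? = f (x + j + E) := repF _ (by omega) (by omega)
        have r2 : T[x + j + r]? = f (x + j + r + E) := repF _ (by omega) (by omega)
        have r3 : T[x + j]? = T[x + j + r]? := PerR _ (by omega) (by omega)
        have e1 : x + E + j = x + j + E := by ring
        have e2 : x + j + E + r = x + j + r + E := by ring
        rw [e1, e2, ← r1, ← r2, r3]
      obtain ⟨c, hc⟩ := Nat.dvd_of_mod_eq_zero hrp
      have e1 : T[b + 1 - r]? = T[b + 1]? := by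
        have h5 := PerR (b + 1 - r) (by omega) (by omega)
        have e : b + 1 - r + r = b + 1 := by omega
        rwa [e] at h5
      have e2 : T[b + 1 - r]? = f (b + 1 + E) := by
        rw [repF (b + 1 - r) (by omega) (by omega)]
        apply fcong
        have e : b + 1 + E = (b + 1 - r + E) + c * p := by
          rw [Nat.mul_comm] at hc; omega
        rw [e, Nat.add_mul_mod_self_right]
      have e3 : T[b + 1 - p]? = f (b + 1 + E) := by
        rw [repF (b + 1 - p) (by omega) (by omega)]
        apply fcong
        have e : b + 1 + E = (b + 1 - p + E) + 1 * p := by omega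
        rw [e, Nat.add_mul_mod_self_right]
      rcases maxR1 with h0 | hne1
      · omega
      exact hne1 (by rw [← e1, e2, ← e3])
    · have hδr : δ < r := by omega
      have hrδ : (r - δ) % p = 0 := by
        apply key (a' - r + E) (r - δ)
        intro j hj
        have r3 : T[a' - r + j]? = T[a' - r + j + r]? := PerR _ (by omega) (by omega)
        have r1 : T[a' - r + j]? = f (a' - r + j + E) := repF _ (by omega) (by omega)
        have r2 : T[a' - r + j + r]? = f (a' - r + j + r + E') := repF' _ (by omega) (by omega)
        have r4 : f (a' - r + j + r + E') = f (a' - r + j + (r - δ) + E) := by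
          have e : a' - r + j + r + E' = (a' - r + j + (r - δ)) + δ + E' := by omega
          rw [e, fsh]
        have e1 : a' - r + E + j = a' - r + j + E := by ring
        have e2 : a' - r + j + E + (r - δ) = a' - r + j + (r - δ) + E := by ring
        rw [e1, e2, ← r1, ← r4, ← r2, r3]
      obtain ⟨c, hc⟩ := Nat.dvd_of_mod_eq_zero hrδ
      have hqd : (q - δ) % p = 0 := by
        have h0 : δ ≡ q [MOD p] := by
          show δ % p = q % p; rw [hqδ, Nat.mod_eq_of_lt hδp]
        obtain ⟨c', hc'⟩ := (Nat.modEq_iff_dvd' (by omega : δ ≤ q)).mp h0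
        rw [hc']; exact Nat.mul_mod_right p c'
      obtain ⟨k1, hk1⟩ := Nat.dvd_of_mod_eq_zero hqd
      have hrr : r = p * c + δ := by omega
      have hqq : q = p * k1 + δ := by omega
      rcases Nat.lt_or_ge c k1 with hck | hck
      · have hmul : p * (c + 1) ≤ p * k1 := Nat.mul_le_mul_left p hck
        have e : p * (c + 1) = p * c + p := by ring
        omega
      · have hmul : p * k1 ≤ p * c := Nat.mul_le_mul_left p hck
        omega
  have main2 : ∀ k : ℕ, 4 ≤ k → a + (k * p + δ) < a' → b + (k * p + δ) < b' →
      minPeriod (frag T (a' - (k * p + δ)) (b + (k * p + δ))) = k * p + δ := by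
    intro k hk haq hbq
    have h4p : 4 * p ≤ k * p := Nat.mul_le_mul_right p hk
    apply minperY (k * p + δ) (b + (k * p + δ)) ?_ (by omega) haq hbq (by omega) (by omega) (by omega)
    rw [Nat.add_comm, Nat.add_mul_mod_self_right]
    exact Nat.mod_eq_of_lt hδp
  have layerOf : ∀ k : ℕ, 4 ≤ k → a + (k * p + δ) < a' → b + (k * p + δ) < b' →
      IsLayer T a b a' b' (a' - (k * p + δ)) (b + (k * p + δ)) := by
    intro k hk haq hbq
    have h4p : 4 * p ≤ k * p := Nat.mul_le_mul_right p hk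
    set q := k * p + δ with hqdef
    set x := a' - q with hxdef
    set y := b + q with hydef
    have hqδ : q % p = δ := by
      rw [hqdef, Nat.add_comm, Nat.add_mul_mod_self_right]
      exact Nat.mod_eq_of_lt hδp
    have hxq : x + q = a' := by omega
    have h4q : 4 * p ≤ q := by omega
    have hq0 : 0 < q := by omega
    have hax : a < x := by omega
    have hyn : y < T.length := by omega
    have hxy : x ≤ y := by omega
    have hmr : minPeriod (frag T x y) = q := main2 k hk haq hbq
    have PerQ : ∀ i, x ≤ i → i + q ≤ y → T[i]? = T[i + q]? :=
      isPeriodOf_frag_toT hyn (hmr ▸ minPeriod_isPeriodOf (frag_ne_nil T x y hxy hyn))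
    have hbL : T[x - 1]? ≠ T[x - 1 + q]? := by
      intro hcon
      have e0 : x - 1 + q = a' - 1 := by omega
      rcases maxL2 with h0 | hne
      · omega
      apply hne
      have r1 : T[x - 1]? = f (x - 1 + E) := repF _ (by omega) (by omega)
      have r2 : T[a' - 1 + p]? = f (a' - 1 + p + E') := repF' _ (by omega) (by omega)
      have r3 : f (a' - 1 + p + E') = f (x - 1 + E) := by
        have e : a' - 1 + p + E' = x - 1 + δ + E' + (k + 1) * p := by
          rw [Nat.add_mul, Nat.one_mul]; omega
        rw [e, fp, fsh]
      rw [e0] at hcon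
      rw [← hcon, r1, r2, r3]
    have hbR : T[y + 1]? ≠ T[y + 1 - q]? := by
      intro hcon
      have e0 : y + 1 - q = b + 1 := by omega
      rcases maxR1 with h0 | hne
      · omega
      apply hne
      have r1 : T[y + 1]? = f (y + 1 + E') := repF' _ (by omega) (by omega)
      have r2 : f (y + 1 + E') = f (b + 1 + E) := by
        have e : y + 1 + E' = b + 1 + δ + E' + k * p := by omega
        rw [e, fp, fsh]
      have r3 : T[b + 1 - p]? = f (b + 1 + E) := by
        rw [repF (b + 1 - p) (by omega) (by omega)]
        apply fcong
        have e : b + 1 + E = (b + 1 - p + E) + 1 * p := by omega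
        rw [e, Nat.add_mul_mod_self_right]
      rw [e0] at hcon
      rw [← hcon, r1, r2, r3]
    -- the witness square for subper
    have hsub : subper (frag T x y) = p := by
      set X := frag T x (a' - 1) with hXdef
      have hXlen : X.length = q := by
        rw [hXdef, frag_length' T x (a' - 1) (by omega) (by omega)]; omega
      have hXne : X ≠ [] := by
        intro h; rw [h] at hXlen; simp at hXlen; omega
      have hXget : ∀ j, j < q → X[j]? = T[x + j]? := by
        intro j hj; rw [hXdef, frag_get? T x (a' - 1) j (by omega)]
      have hXX : X ++ X = frag T x (a' + q - 1) := by
        apply List.ext_getElem?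
        intro j
        rcases Nat.lt_or_ge j (2 * q) with hj2 | hj2
        · have hfr : (frag T x (a' + q - 1))[j]? = T[x + j]? :=
            frag_get? T x (a' + q - 1) j (by omega)
          rcases Nat.lt_or_ge j q with hjq | hjq
          · rw [List.getElem?_append_left (by omega : j < X.length), hfr, hXget j hjq]
          · rw [List.getElem?_append_right (by omega : X.length ≤ j), hfr]
            have e1 : j - X.length = j - q := by omega
            rw [e1, hXget (j - q) (by omega)]
            have h5 := PerQ (x + (j - q)) (by omega) (by omega)
            rw [h5]; congr 1; omega
        · have h6 : (X ++ X)[j]? = none := by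
            apply List.getElem?_eq_none_iff.mpr
            rw [List.length_append]; omega
          have h7 : (frag T x (a' + q - 1))[j]? = none := by
            apply List.getElem?_eq_none_iff.mpr
            rw [frag_length' T x (a' + q - 1) (by omega) (by omega)]; omega
          rw [h6, h7]
      have hprefix : frag T x (a' + q - 1) = (frag T x y).take (2 * q) := by
        rw [frag, frag, List.take_take]
        congr 1
        omega
      have hinfix : X ++ X <:+: frag T x y := by
        rw [hXX, hprefix]
        exact (List.take_prefix _ _).isInfix
      have hXXmin : minPeriod (X ++ X) = q := by
        rw [hXX]
        exact minperY q (a' + q - 1) hqδ h4q haq hbq (by omega) (by omega) (by omega)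
      have hXmin : minPeriod X = p := by
        have hle : minPeriod X ≤ p := by
          apply minPeriod_le
          rw [hXdef]
          apply isPeriodOf_frag_ofT hp0 (by omega) (by omega) (by omega)
          intro i hxi hia
          exact PF i (by omega) (by omega)
        by_contra hgt
        have hlt2 : minPeriod X < p := by omega
        have hm0 : 0 < minPeriod X := minPeriod_pos hXne
        have PerM : ∀ i, x ≤ i → i + minPeriod X ≤ a' - 1 → T[i]? = T[i + minPeriod X]? := by
          have h8 : IsPeriodOf (minPeriod X) (frag T x (a' - 1)) := by
            rw [← hXdef]; exact minPeriod_isPeriodOf hXne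
          exact isPeriodOf_frag_toT (by omega) h8
        have hmp : minPeriod X % p = 0 := by
          apply key (x + E) (minPeriod X)
          intro j hj
          have r3 : T[x + j]? = T[x + j + minPeriod X]? := PerM _ (by omega) (by omega)
          have r1 : T[x + j]? = f (x + j + E) := repF _ (by omega) (by omega)
          have r2 : T[x + j + minPeriod X]? = f (x + j + minPeriod X + E) :=
            repF _ (by omega) (by omega)
          have e1 : x + E + j = x + j + E := by ring
          have e2 : x + j + E + minPeriod X = x + j + minPeriod X + E := by ring
          rw [e1, e2, ← r1, ← r2, r3]
        have := Nat.mod_eq_of_lt hlt2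
        omega
      have hSne : p ∈ {q' : ℕ | ∃ X0 : List α, X0 ≠ [] ∧ (X0 ++ X0) <:+: frag T x y ∧
          minPeriod (X0 ++ X0) = minPeriod (frag T x y) ∧ minPeriod X0 = q'} :=
        ⟨X, hXne, hinfix, by rw [hXXmin, hmr], hXmin⟩
      have hlow : ∀ m', m' ∈ {q' : ℕ | ∃ X0 : List α, X0 ≠ [] ∧ (X0 ++ X0) <:+: frag T x y ∧
          minPeriod (X0 ++ X0) = minPeriod (frag T x y) ∧ minPeriod X0 = q'} → p ≤ m' := by
        rintro m' ⟨X0, hX0ne, hX0inf, hX0min, rfl⟩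
        by_contra hm'
        push_neg at hm'
        set L := X0.length with hLdef
        have hL0 : 0 < L := List.length_pos_iff.mpr hX0ne
        have hPL : q ≤ L := by
          have h5 := minPeriod_le (isPeriodOf_append_self hX0ne)
          rw [hX0min, hmr] at h5
          exact h5
        obtain ⟨s, hs1, hs2, hocc⟩ := occ_of_infix hxy hyn hX0inf
        have hlenXX : (X0 ++ X0).length = 2 * L := by rw [List.length_append]; omega
        rw [hlenXX] at hs2 hocc
        have hXper : IsPeriodOf (minPeriod X0) X0 := minPeriod_isPeriodOf hX0ne
        set m := minPeriod X0 with hmdef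
        have hm0 : 0 < m := hXper.1
        have hocc1 : ∀ j, j < L → T[s + j]? = X0[j]? := by
          intro j hj
          rw [hocc j (by omega), List.getElem?_append_left (by omega : j < X0.length)]
        have hocc2 : ∀ j, j < L → T[s + L + j]? = X0[j]? := by
          intro j hj
          have h5 := hocc (L + j) (by omega)
          rw [List.getElem?_append_right (by omega : X0.length ≤ L + j)] at h5
          have e : L + j - X0.length = j := by omega
          rw [e] at h5
          rw [← h5]; congr 1; omega
        have Pc1 : ∀ j, j + m < L → T[s + j]? = T[s + j + m]? :=
          per_occ hXper hocc1
        have Pc2 : ∀ j, j + m < L → T[s + L + j]? = T[s + L + j + m]? :=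
          per_occ hXper hocc2
        rcases le_or_gt (s + p + m) (b + 1) with hcs | hcs
        · have hmp : m % p = 0 := by
            apply key (s + E) m
            intro j hj
            have r3 : T[s + j]? = T[s + j + m]? := Pc1 j (by omega)
            have r1 : T[s + j]? = f (s + j + E) := repF _ (by omega) (by omega)
            have r2 : T[s + j + m]? = f (s + j + m + E) := repF _ (by omega) (by omega)
            have e1 : s + E + j = s + j + E := by ring
            have e2 : s + j + E + m = s + j + m + E := by ring
            rw [e1, e2, ← r1, ← r2, r3]
          have := Nat.mod_eq_of_lt hm'
          omega
        · have hmp : m % p = 0 := by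
            apply key (s + L + E') m
            intro j hj
            have r3 : T[s + L + j]? = T[s + L + j + m]? := Pc2 j (by omega)
            have r1 : T[s + L + j]? = f (s + L + j + E') := repF' _ (by omega) (by omega)
            have r2 : T[s + L + j + m]? = f (s + L + j + m + E') :=
              repF' _ (by omega) (by omega)
            have e1 : s + L + E' + j = s + L + j + E' := by ring
            have e2 : s + L + j + E' + m = s + L + j + m + E' := by ring
            rw [e1, e2, ← r1, ← r2, r3]
          have := Nat.mod_eq_of_lt hm'
          omega
      exact le_antisymm (Nat.sInf_le hSne)
        (hlow _ (Nat.sInf_mem (⟨p, hSne⟩ : Set.Nonempty _)))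
    refine ⟨⟨hxy, hyn, ?_, ?_, ?_⟩, ?_, ?_, ?_, ?_⟩
    · rw [hmr]; omega
    · rw [hmr]; exact Or.inr hbL
    · rw [hmr]; exact Or.inr hbR
    · rw [hsub, hmr]; omega
    · rw [hsub, hp1]
    · rw [hmr]
      rw [min_eq_left (by omega : y ≤ b'), max_eq_left (by omega : a ≤ x)]
      omega
    · rw [hmr, min_eq_left (by omega : y ≤ b'), max_eq_left (by omega : a ≤ x)]
      exact isPeriodOf_frag_ofT hq0 hxy hyn (by omega) PerQ
  have subLayer : ∀ x y : ℕ, IsLayer T a b a' b' x y → a < x → y < b' →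
      ∃ k : ℕ, 4 ≤ k ∧ a + (k * p + δ) < a' ∧ b + (k * p + δ) < b' ∧
        x = a' - (k * p + δ) ∧ y = b + (k * p + δ) := by
    intro x y hL hax hyb
    obtain ⟨hrun, h4P, hsubP, hint1, hint2⟩ := hL
    obtain ⟨hxy, hyn, h2P, maxLR, maxRR⟩ := hrun
    rw [hp1] at hsubP
    set P := minPeriod (frag T x y) with hPdef
    have hfne : frag T x y ≠ [] := frag_ne_nil T x y hxy hyn
    have hPpos : 0 < P := minPeriod_pos hfne
    rw [hsubP] at h4P
    have PerP : ∀ i, x ≤ i → i + P ≤ y → T[i]? = T[i + P]? :=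
      isPeriodOf_frag_toT hyn (minPeriod_isPeriodOf hfne)
    have hxa' : x < a' := by
      by_contra h
      push_neg at h
      have h5 : IsPeriodOf p (frag T x y) := by
        apply isPeriodOf_frag_ofT hp0 hxy hyn (by omega)
        intro i hxi hiy
        exact PF' i (by omega) (by omega)
      have := minPeriod_le h5
      omega
    have hby : b < y := by
      by_contra h
      push_neg at h
      have h5 : IsPeriodOf p (frag T x y) := by
        apply isPeriodOf_frag_ofT hp0 hxy hyn (by omega)
        intro i hxi hiy
        exact PF i (by omega) (by omega)
      have := minPeriod_le h5
      omega
    have hSetne : ({q' : ℕ | ∃ X0 : List α, X0 ≠ [] ∧ (X0 ++ X0) <:+: frag T x y ∧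
        minPeriod (X0 ++ X0) = minPeriod (frag T x y) ∧ minPeriod X0 = q'}).Nonempty := by
      by_contra hcon
      rw [Set.not_nonempty_iff_eq_empty] at hcon
      have h9 : subper (frag T x y) = 0 := by
        have he : subper (frag T x y) = sInf {q' : ℕ | ∃ X0 : List α, X0 ≠ [] ∧
            (X0 ++ X0) <:+: frag T x y ∧
            minPeriod (X0 ++ X0) = minPeriod (frag T x y) ∧ minPeriod X0 = q'} := rfl
        rw [he, hcon, Nat.sInf_empty]
      omega
    have h9 : subper (frag T x y) ∈ {q' : ℕ | ∃ X0 : List α, X0 ≠ [] ∧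
        (X0 ++ X0) <:+: frag T x y ∧
        minPeriod (X0 ++ X0) = minPeriod (frag T x y) ∧ minPeriod X0 = q'} :=
      Nat.sInf_mem hSetne
    rw [hsubP] at h9
    obtain ⟨X0, hX0ne, hX0inf, hX0min, hXmp⟩ := h9
    rw [← hPdef] at hX0min
    set L := X0.length with hLdef
    have hL0 : 0 < L := List.length_pos_iff.mpr hX0ne
    have hPL : P ≤ L := by
      have h5 := minPeriod_le (isPeriodOf_append_self hX0ne)
      rw [hX0min] at h5
      exact h5
    obtain ⟨s, hs1, hs2, hocc⟩ := occ_of_infix hxy hyn hX0inf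
    have hlenXX : (X0 ++ X0).length = 2 * L := by rw [List.length_append]; omega
    rw [hlenXX] at hs2
    have hXper : IsPeriodOf p X0 := by rw [← hXmp]; exact minPeriod_isPeriodOf hX0ne
    have hocc1 : ∀ j, j < L → T[s + j]? = X0[j]? := by
      intro j hj
      rw [hocc j (by rw [hlenXX]; omega), List.getElem?_append_left (by omega : j < X0.length)]
    have hocc2 : ∀ j, j < L → T[s + L + j]? = X0[j]? := by
      intro j hj
      have h5 := hocc (L + j) (by rw [hlenXX]; omega)
      rw [List.getElem?_append_right (by omega : X0.length ≤ L + j)] at h5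
      have e : L + j - X0.length = j := by omega
      rw [e] at h5
      rw [← h5]; congr 1; omega
    have Pc1 : ∀ j, j + p < L → T[s + j]? = T[s + j + p]? := per_occ hXper hocc1
    have Pc2 : ∀ j, j + p < L → T[s + L + j]? = T[s + L + j + p]? := per_occ hXper hocc2
    have hXXne : X0 ++ X0 ≠ [] := by simp [hX0ne]
    have hXXper : IsPeriodOf P (X0 ++ X0) := by
      rw [← hX0min]; exact minPeriod_isPeriodOf hXXne
    have PXX : ∀ j, j + P < 2 * L → T[s + j]? = T[s + j + P]? := by
      intro j hj
      have e : s + j + P = s + (j + P) := by omega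
      rw [hocc j (by rw [hlenXX]; omega), e, hocc (j + P) (by rw [hlenXX]; omega)]
      exact hXXper.2.2 j (by rw [hlenXX]; omega)
    have hdich1 : s + L ≤ b + 1 ∨ a' ≤ s := by
      by_contra hcon
      push_neg at hcon
      obtain ⟨hc1, hc2⟩ := hcon
      rcases le_or_gt s (b + 1 - p) with hsp | hsp
      · have h5 := Pc1 (b + 1 - p - s) (by omega)
        have e1 : s + (b + 1 - p - s) = b + 1 - p := by omega
        have e2 : s + (b + 1 - p - s) + p = b + 1 := by omega
        rw [e2, e1] at h5
        rcases maxR1 with h0 | hne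
        · omega
        exact hne h5.symm
      · have h5 := Pc1 (a' - 1 - s) (by omega)
        have e1 : s + (a' - 1 - s) = a' - 1 := by omega
        have e2 : s + (a' - 1 - s) + p = a' - 1 + p := by omega
        rw [e2, e1] at h5
        rcases maxL2 with h0 | hne
        · omega
        exact hne h5
    have hdich2 : s + 2 * L ≤ b + 1 ∨ a' ≤ s + L := by
      by_contra hcon
      push_neg at hcon
      obtain ⟨hc1, hc2⟩ := hcon
      rcases le_or_gt (s + L) (b + 1 - p) with hsp | hsp
      · have h5 := Pc2 (b + 1 - p - (s + L)) (by omega)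
        have e1 : s + L + (b + 1 - p - (s + L)) = b + 1 - p := by omega
        have e2 : s + L + (b + 1 - p - (s + L)) + p = b + 1 := by omega
        rw [e2, e1] at h5
        rcases maxR1 with h0 | hne
        · omega
        exact hne h5.symm
      · have h5 := Pc2 (a' - 1 - (s + L)) (by omega)
        have e1 : s + L + (a' - 1 - (s + L)) = a' - 1 := by omega
        have e2 : s + L + (a' - 1 - (s + L)) + p = a' - 1 + p := by omega
        rw [e2, e1] at h5
        rcases maxL2 with h0 | hne
        · omega
        exact hne h5
    have hsb : s + L ≤ b + 1 := by
      rcases hdich1 with h | h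
      · exact h
      · exfalso
        have h5 : IsPeriodOf p (X0 ++ X0) := by
          apply isPeriodOf_of_occ hp0 (by rw [hlenXX]; omega) hocc
          intro j hj
          rw [hlenXX] at hj
          exact PF' (s + j) (by omega) (by omega)
        have h6 := minPeriod_le h5
        rw [hX0min] at h6
        omega
    have hs2' : a' ≤ s + L := by
      rcases hdich2 with h | h
      · exfalso
        have h5 : IsPeriodOf p (X0 ++ X0) := by
          apply isPeriodOf_of_occ hp0 (by rw [hlenXX]; omega) hocc
          intro j hj
          rw [hlenXX] at hj
          exact PF (s + j) (by omega) (by omega)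
        have h6 := minPeriod_le h5
        rw [hX0min] at h6
        omega
      · exact h
    have hPδ : (P - δ) % p = 0 := by
      apply key (s + L - P + E) (P - δ)
      intro j hj
      have r3 : T[s + L - P + j]? = T[s + L + j]? := by
        have h5 := PXX (L - P + j) (by omega)
        have e1 : s + (L - P + j) = s + L - P + j := by omega
        have e2 : s + (L - P + j) + P = s + L + j := by omega
        rwa [e2, e1] at h5
      have r1 : T[s + L - P + j]? = f (s + L - P + j + E) := repF _ (by omega) (by omega)
      have r2 : T[s + L + j]? = f (s + L + j + E') := repF' _ (by omega) (by omega)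
      have r4 : f (s + L + j + E') = f (s + L - P + j + (P - δ) + E) := by
        have e : s + L + j + E' = (s + L - P + j + (P - δ)) + δ + E' := by omega
        rw [e, fsh]
      have e1 : s + L - P + E + j = s + L - P + j + E := by omega
      have e2 : s + L - P + j + E + (P - δ) = s + L - P + j + (P - δ) + E := by omega
      rw [e1, e2, ← r1, ← r4, ← r2, r3]
    obtain ⟨c, hc⟩ := Nat.dvd_of_mod_eq_zero hPδ
    have hPc : P = p * c + δ := by omega
    have hc4 : 4 ≤ c := by
      by_contra hcon
      push_neg at hcon
      have h5 : p * c ≤ p * 3 := Nat.mul_le_mul_left p (by omega)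
      omega
    have hxP : x + P = a' := by
      rcases lt_trichotomy (x + P) a' with h | h | h
      · exfalso
        have h5 := PerP (a' - 1 - P) (by omega) (by omega)
        have e1 : a' - 1 - P + P = a' - 1 := by omega
        rw [e1] at h5
        have r1 : T[a' - 1 - P]? = f (a' - 1 - P + E) := repF _ (by omega) (by omega)
        have r2 : T[a' - 1 + p]? = f (a' - 1 - P + E) := by
          rw [repF' (a' - 1 + p) (by omega) (by omega)]
          apply fcong
          have e : a' - 1 + p + E' = (a' - 1 - P + δ + E') + (c + 1) * p := by
            have e5 : (c + 1) * p = c * p + p := by ring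
            rw [e5, Nat.mul_comm c p]
            omega
          rw [e, Nat.add_mul_mod_self_right]
          exact hshift (a' - 1 - P)
        rcases maxL2 with h0 | hne
        · omega
        exact hne (by rw [← h5, r1, ← r2])
      · exact h
      · exfalso
        rcases maxLR with h0 | hne
        · omega
        apply hne
        have r1 : T[x - 1]? = f (x - 1 + E) := repF _ (by omega) (by omega)
        have r2 : T[x - 1 + P]? = f (x - 1 + E) := by
          rw [repF' (x - 1 + P) (by omega) (by omega)]
          apply fcong
          have e : x - 1 + P + E' = (x - 1 + δ + E') + c * p := by
            rw [Nat.mul_comm c p]; omega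
          rw [e, Nat.add_mul_mod_self_right]
          exact hshift (x - 1)
        rw [r1, r2]
    have hyP : y = b + P := by
      rcases lt_trichotomy y (b + P) with h | h | h
      · exfalso
        rcases maxRR with h0 | hne
        · omega
        apply hne
        have r1 : T[y + 1 - P]? = f (y + 1 - P + E) := repF _ (by omega) (by omega)
        have r2 : T[y + 1]? = f (y + 1 - P + E) := by
          rw [repF' (y + 1) (by omega) (by omega)]
          apply fcong
          have e : y + 1 + E' = (y + 1 - P + δ + E') + c * p := by
            rw [Nat.mul_comm c p]; omega
          rw [e, Nat.add_mul_mod_self_right]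
          exact hshift (y + 1 - P)
        rw [r1, r2]
      · exact h
      · exfalso
        have h5 := PerP (b + 1) (by omega) (by omega)
        have r1 : T[b + 1 + P]? = f (b + 1 + E) := by
          rw [repF' (b + 1 + P) (by omega) (by omega)]
          apply fcong
          have e : b + 1 + P + E' = (b + 1 + δ + E') + c * p := by
            rw [Nat.mul_comm c p]; omega
          rw [e, Nat.add_mul_mod_self_right]
          exact hshift (b + 1)
        have r3 : T[b + 1 - p]? = f (b + 1 + E) := by
          rw [repF (b + 1 - p) (by omega) (by omega)]
          apply fcong
          have e : b + 1 + E = (b + 1 - p + E) + 1 * p := by omega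
          rw [e, Nat.add_mul_mod_self_right]
        rcases maxR1 with h0 | hne
        · omega
        exact hne (by rw [h5, r1, ← r3])
    have hcm : c * p = p * c := Nat.mul_comm c p
    exact ⟨c, hc4, by omega, by omega, by omega, by omega⟩
  refine ⟨?_, main2⟩
  ext xy
  simp only [Set.mem_setOf_eq]
  constructor
  · rintro ⟨hl, hax, hyb⟩
    obtain ⟨k, hk4, h5, h6, h7, h8⟩ := subLayer xy.1 xy.2 hl hax hyb
    exact ⟨k, hk4, h5, h6, Prod.ext h7 h8⟩
  · rintro ⟨k, hk4, h5, h6, h7⟩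
    rw [h7]
    exact ⟨layerOf k hk4 h5 h6, by omega, by omega⟩
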